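/- For any Boolean map f : 𝔹^n → 𝔹^n, the map G_f : X → X defined by G_f(S,x) = (σ(S), F_f(S^0, x)) is continuous on the metric space (X, d). -/

import Mathlib

noncomputable def de (n : ℕ) (E F : Fin n → Bool) : ℝ :=
  ∑ k : Fin n, if E k = F k then 0 else 1

noncomputable def ds (n : ℕ) (S T : ℕ → Fin n) : ℝ :=
  (9 / (n : ℝ)) * ∑' k : ℕ, |((S k : ℕ) : ℝ) - ((T k : ℕ) : ℝ)| / 10 ^ (k + 1)

noncomputable def dX (n : ℕ) (X Y : (ℕ → Fin n) × (Fin n → Bool)) : ℝ :=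
  de n X.2 Y.2 + ds n X.1 Y.1

def Ff (n : ℕ) (f : (Fin n → Bool) → Fin n → Bool) (i : Fin n) (x : Fin n → Bool) :
    Fin n → Bool :=
  Function.update x i (f x i)

def Gf (n : ℕ) (f : (Fin n → Bool) → Fin n → Bool)
    (X : (ℕ → Fin n) × (Fin n → Bool)) : (ℕ → Fin n) × (Fin n → Bool) :=
  (fun t => X.1 (t + 1), Ff n f (X.1 0) X.2)

def Gneg (n : ℕ) : (ℕ → Fin n) × (Fin n → Bool) → (ℕ → Fin n) × (Fin n → Bool) :=
  Gf n (fun x i => !(x i))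

lemma summable_aux (n : ℕ) (S T : ℕ → Fin n) :
    Summable (fun k : ℕ => |((S k : ℕ) : ℝ) - ((T k : ℕ) : ℝ)| / 10 ^ (k + 1)) := by
  have hsum : Summable (fun k : ℕ => (2 * n : ℝ) * (1/10 : ℝ) ^ (k + 1)) := by
    simp_rw [pow_succ]
    exact ((summable_geometric_of_lt_one (by norm_num) (by norm_num)).mul_right _).mul_left _
  refine Summable.of_nonneg_of_le (fun k => by positivity) (fun k => ?_) hsum
  rw [div_le_iff₀ (by positivity)]
  have h1 : ((S k : ℕ) : ℝ) ≤ n := by exact_mod_cast le_of_lt (S k).2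
  have h2 : ((T k : ℕ) : ℝ) ≤ n := by exact_mod_cast le_of_lt (T k).2
  have h3 : (0:ℝ) ≤ ((S k : ℕ) : ℝ) := by positivity
  have h4 : (0:ℝ) ≤ ((T k : ℕ) : ℝ) := by positivity
  have hb : |((S k : ℕ) : ℝ) - ((T k : ℕ) : ℝ)| ≤ 2 * n := by
    rw [abs_le]; constructor <;> nlinarith
  calc |((S k : ℕ) : ℝ) - ((T k : ℕ) : ℝ)| ≤ 2 * n := hb
    _ = 2 * n * (1/10 : ℝ) ^ (k+1) * 10 ^ (k+1) := by
        rw [div_pow, one_pow]; field_simp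

lemma ds_shift (n : ℕ) (S T : ℕ → Fin n) :
    ds n (fun t => S (t+1)) (fun t => T (t+1)) ≤ 10 * ds n S T := by
  unfold ds
  rw [← mul_assoc, mul_comm (10:ℝ), mul_assoc]
  refine mul_le_mul_of_nonneg_left ?_ (by positivity)
  have hfull := summable_aux n S T
  have key : ∑' k, |((S k:ℕ):ℝ) - ((T k:ℕ):ℝ)|/10^(k+1)
      = |((S 0:ℕ):ℝ) - ((T 0:ℕ):ℝ)|/10^(0+1)
        + ∑' k, |((S (k+1):ℕ):ℝ) - ((T (k+1):ℕ):ℝ)|/10^(k+1+1) := by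
    rw [Summable.tsum_eq_zero_add hfull]
  have h2 : ∑' k, |((S (k+1):ℕ):ℝ) - ((T (k+1):ℕ):ℝ)|/10^(k+1+1)
      = (1/10) * ∑' k, |((S (k+1):ℕ):ℝ) - ((T (k+1):ℕ):ℝ)|/10^(k+1) := by
    rw [← tsum_mul_left]; congr 1; funext k; ring
  have h0 : (0:ℝ) ≤ |((S 0:ℕ):ℝ) - ((T 0:ℕ):ℝ)|/10^(0+1) := by positivity
  rw [h2] at key
  linarith

lemma de_nonneg (n : ℕ) (E F : Fin n → Bool) : 0 ≤ de n E F := by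
  unfold de; apply Finset.sum_nonneg; intro i _; positivity

lemma ds_nonneg (n : ℕ) (S T : ℕ → Fin n) : 0 ≤ ds n S T := by
  unfold ds
  apply mul_nonneg (by positivity)
  apply tsum_nonneg; intro k; positivity

theorem stmt3 (n : ℕ) (hn : 1 ≤ n) (f : (Fin n → Bool) → Fin n → Bool) :
    ∀ X : (ℕ → Fin n) × (Fin n → Bool), ∀ ε > (0 : ℝ), ∃ δ > (0 : ℝ),
      ∀ Y, dX n X Y < δ → dX n (Gf n f X) (Gf n f Y) < ε := by
  intro X ε hε
  have hn0 : (0:ℝ) < n := by exact_mod_cast hn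
  refine ⟨min (ε/10) (min 1 (9/(10*n))), by positivity, ?_⟩
  rintro ⟨T, F⟩ hY
  obtain ⟨S, E⟩ := X
  have hde := de_nonneg n E F
  have hds := ds_nonneg n S T
  have hdX : dX n (S, E) (T, F) = de n E F + ds n S T := rfl
  have hδε : min (ε/10) (min 1 (9/(10*(n:ℝ)))) ≤ ε/10 := min_le_left _ _
  have hδ1 : min (ε/10) (min 1 (9/(10*(n:ℝ)))) ≤ 1 := (min_le_right _ _).trans (min_le_left _ _)
  have hδ2 : min (ε/10) (min 1 (9/(10*(n:ℝ)))) ≤ 9/(10*(n:ℝ)) :=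
    (min_le_right _ _).trans (min_le_right _ _)
  rw [hdX] at hY
  have hEF : E = F := by
    by_contra h
    obtain ⟨k, hk⟩ := Function.ne_iff.mp h
    have h1 : (1:ℝ) ≤ de n E F := by
      unfold de
      have := Finset.single_le_sum (f := fun j => if E j = F j then (0:ℝ) else 1)
        (fun i _ => by positivity) (Finset.mem_univ k)
      simpa [hk] using this
    linarith
  have hS0 : S 0 = T 0 := by
    by_contra h
    have hne : ((S 0 : ℕ) : ℤ) ≠ ((T 0 : ℕ) : ℤ) := by
      exact_mod_cast fun he => h (Fin.ext he)
    have h2 : (1:ℤ) ≤ |((S 0:ℕ):ℤ) - ((T 0:ℕ):ℤ)| := Int.one_le_abs (sub_ne_zero.mpr hne)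
    have h3 : (1:ℝ) ≤ |((S 0:ℕ):ℝ) - ((T 0:ℕ):ℝ)| := by
      have := (@Int.cast_le ℝ _ _ _).mpr h2
      push_cast at this
      linarith
    have hterm : |((S 0:ℕ):ℝ) - ((T 0:ℕ):ℝ)|/10^(0+1)
        ≤ ∑' k, |((S k:ℕ):ℝ) - ((T k:ℕ):ℝ)|/10^(k+1) :=
      Summable.le_tsum (summable_aux n S T) 0 (fun j _ => by positivity)
    have hds2 : 9/(10*(n:ℝ)) ≤ ds n S T := by
      unfold ds
      have : (9/(n:ℝ)) * (1/10) ≤ (9/(n:ℝ)) * ∑' k, |((S k:ℕ):ℝ) - ((T k:ℕ):ℝ)|/10^(k+1) := by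
        apply mul_le_mul_of_nonneg_left _ (by positivity)
        calc (1:ℝ)/10 ≤ |((S 0:ℕ):ℝ) - ((T 0:ℕ):ℝ)|/10^(0+1) := by
              rw [pow_one]; linarith
          _ ≤ _ := hterm
      calc 9/(10*(n:ℝ)) = (9/(n:ℝ)) * (1/10) := by field_simp
        _ ≤ _ := this
    linarith
  have himg : dX n (Gf n f (S, E)) (Gf n f (T, F))
      = ds n (fun t => S (t+1)) (fun t => T (t+1)) := by
    show de n (Ff n f (S 0) E) (Ff n f (T 0) F) + _ = _
    rw [hEF, hS0]
    have : de n (Ff n f (T 0) F) (Ff n f (T 0) F) = 0 := by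
      unfold de; simp
    rw [this, zero_add]; rfl
  rw [himg]
  have hsh := ds_shift n S T
  linarith
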